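/- Let V be a 5-dimensional k-vector space with basis e₀,…,e₄ and let N = [[e₁,e₂],[e₃,e₁]] ∈ Mat₂ₓ₂(V). If g, h ∈ GL₂(k) and λ ∈ k* satisfy g·N·h = λ·N (where the matrix products are taken with scalar matrices acting on vector entries), then g and h are both scalar multiples of the identity matrix. -/
import Mathlib


/- STATEMENT 11: For `N = [[e₁,e₂],[e₃,e₁]]` (e₁,e₂,e₃ linearly independent in a
5-dimensional space V), if `g·N·h = λ·N` for `g, h ∈ GL₂(k)` and `λ ∈ k*`, then `g`
and `h` are scalar matrices. -/

theorem stabilizer_trivial_T3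
    {k V : Type} [Field k] [IsAlgClosed k] [CharZero k]
    [AddCommGroup V] [Module k V] [FiniteDimensional k V]
    (hV : Module.finrank k V = 5)
    (e₁ e₂ e₃ : V) (hli : LinearIndependent k ![e₁, e₂, e₃])
    (g h : GL (Fin 2) k) (lam : k) (hlam : lam ≠ 0)
    (heq : ∀ i j : Fin 2,
      (∑ a : Fin 2, ∑ b : Fin 2,
          ((g : Matrix (Fin 2) (Fin 2) k) i a * (h : Matrix (Fin 2) (Fin 2) k) b j) •
            (Matrix.of ![![e₁, e₂], ![e₃, e₁]]) a b)
        = lam • (Matrix.of ![![e₁, e₂], ![e₃, e₁]]) i j) :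
    (∃ c : k, (g : Matrix (Fin 2) (Fin 2) k) = c • (1 : Matrix (Fin 2) (Fin 2) k)) ∧
    (∃ d : k, (h : Matrix (Fin 2) (Fin 2) k) = d • (1 : Matrix (Fin 2) (Fin 2) k)) := by
  have key : ∀ x y z : k, x • e₁ + y • e₂ + z • e₃ = 0 → x = 0 ∧ y = 0 ∧ z = 0 := by
    intro x y z hxyz
    have := Fintype.linearIndependent_iff.mp hli ![x, y, z]
      (by simpa [Fin.sum_univ_three] using hxyz)
    exact ⟨this 0, this 1, this 2⟩
  set G := (g : Matrix (Fin 2) (Fin 2) k) with hG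
  set H := (h : Matrix (Fin 2) (Fin 2) k) with hH
  set a := G 0 0; set b := G 0 1; set c := G 1 0; set d := G 1 1
  set p := H 0 0; set q := H 0 1; set r := H 1 0; set s := H 1 1
  have E00 := heq 0 0
  have E01 := heq 0 1
  have E10 := heq 1 0
  have E11 := heq 1 1
  simp only [Fin.sum_univ_two, Matrix.of_apply, Matrix.cons_val', Matrix.cons_val_zero,
    Matrix.cons_val_one, Matrix.head_cons, Matrix.empty_val', Matrix.cons_val_fin_one,
    Matrix.head_fin_const] at E00 E01 E10 E11
  have K00 := key (a * p + b * r - lam) (a * r) (b * p)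
    (by linear_combination (norm := module) E00)
  have K01 := key (a * q + b * s) (a * s - lam) (b * q)
    (by linear_combination (norm := module) E01)
  have K10 := key (c * p + d * r) (c * r) (d * p - lam)
    (by linear_combination (norm := module) E10)
  have K11 := key (c * q + d * s - lam) (c * s) (d * q)
    (by linear_combination (norm := module) E11)
  obtain ⟨h1, h2, h3⟩ := K00
  obtain ⟨h4, h5, h6⟩ := K01
  obtain ⟨h7, h8, h9⟩ := K10
  obtain ⟨h10, h11, h12⟩ := K11
  have has : a * s = lam := by linear_combination h5
  have ha : a ≠ 0 := fun h0 => hlam (by rw [← has, h0, zero_mul])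
  have hs : s ≠ 0 := fun h0 => hlam (by rw [← has, h0, mul_zero])
  have hr : r = 0 := by
    rcases mul_eq_zero.mp h2 with h0 | h0
    · exact absurd h0 ha
    · exact h0
  have hc : c = 0 := by
    rcases mul_eq_zero.mp h11 with h0 | h0
    · exact h0
    · exact absurd h0 hs
  have hdp : d * p = lam := by linear_combination h9
  have hd : d ≠ 0 := fun h0 => hlam (by rw [← hdp, h0, zero_mul])
  have hp : p ≠ 0 := fun h0 => hlam (by rw [← hdp, h0, mul_zero])
  have hb : b = 0 := by
    rcases mul_eq_zero.mp h3 with h0 | h0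
    · exact h0
    · exact absurd h0 hp
  have hq : q = 0 := by
    rcases mul_eq_zero.mp h12 with h0 | h0
    · exact absurd h0 hd
    · exact h0
  have hap : a * p = lam := by
    have : a * p + b * r - lam = 0 := h1
    rw [hb, hr] at this; linear_combination this
  have hds : d * s = lam := by
    have : c * q + d * s - lam = 0 := h10
    rw [hc, hq] at this; linear_combination this
  have had : a = d := by
    have : a * p = d * p := by rw [hap, hdp]
    exact mul_right_cancel₀ hp this
  have hps : p = s := by
    have : a * p = a * s := by rw [hap, has]
    exact mul_left_cancel₀ ha this
  constructor
  · refine ⟨a, ?_⟩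
    have hGe : G = Matrix.of ![![a, b], ![c, d]] := Matrix.eta_fin_two G
    rw [hGe, hb, hc, ← had]
    ext i j
    fin_cases i <;> fin_cases j <;> simp [Matrix.one_apply]
  · refine ⟨p, ?_⟩
    have hHe : H = Matrix.of ![![p, q], ![r, s]] := Matrix.eta_fin_two H
    rw [hHe, hq, hr, ← hps]
    ext i j
    fin_cases i <;> fin_cases j <;> simp [Matrix.one_apply]
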